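/- arXiv:2506.08659 — 9 statements merged into one kernel-verified Lean document; each statement's English description precedes it below -/
import Mathlib

section
/- For a braid projection word w on n strands, every entry of the CN matrix N(w) is even if and only if w is pure (the permutation of strands induced by w is the identity). -/
/-- Left position of a crossing letter, as an element of `Fin n`. -/
def posL (n : ℕ) (k : Fin (n - 1)) : Fin n := ⟨k.val, by have := k.isLt; omega⟩

/-- Right position of a crossing letter, as an element of `Fin n`. -/
def posR (n : ℕ) (k : Fin (n - 1)) : Fin n := ⟨k.val + 1, by have := k.isLt; omega⟩

/-- The transposition of positions induced by a crossing letter. -/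
def braidSwap (n : ℕ) (k : Fin (n - 1)) : Equiv.Perm (Fin n) :=
  Equiv.swap (posL n k) (posR n k)

/-- CN matrix of a braid projection word, scanning with position-to-strand
assignment `π`.  Each letter records one crossing between the two strand
labels currently at the involved positions (counted symmetrically). -/
def CNaux (n : ℕ) : Equiv.Perm (Fin n) → List (Fin (n - 1)) → Matrix (Fin n) (Fin n) ℕ
  | _, [] => 0
  | π, k :: w =>
      Matrix.single (π (posL n k)) (π (posR n k)) 1 +
      Matrix.single (π (posR n k)) (π (posL n k)) 1 +
      CNaux n (π * braidSwap n k) w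

/-- CN matrix of a braid projection word on `n` strands. -/
def CN (n : ℕ) (w : List (Fin (n - 1))) : Matrix (Fin n) (Fin n) ℕ := CNaux n 1 w

/-- Final position-to-strand assignment after scanning the word. -/
def finalPerm (n : ℕ) : Equiv.Perm (Fin n) → List (Fin (n - 1)) → Equiv.Perm (Fin n)
  | π, [] => π
  | π, k :: w => finalPerm n (π * braidSwap n k) w

/-- A braid projection word is pure if the induced permutation of strands
is the identity. -/
def IsPure (n : ℕ) (w : List (Fin (n - 1))) : Prop := finalPerm n 1 w = 1

/-- A zero-diagonal matrix is T0 if `i < j < k`, `M i j = 0` and `M j k = 0`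
imply `M i k = 0`. -/
def IsT0 {n : ℕ} {α : Type*} [Zero α] (M : Matrix (Fin n) (Fin n) α) : Prop :=
  ∀ i j k : Fin n, i < j → j < k → M i j = 0 → M j k = 0 → M i k = 0

lemma braidSwap_val (n : ℕ) (k : Fin (n-1)) (z : Fin n) :
    (braidSwap n k z).val =
      if z.val = k.val then k.val + 1 else if z.val = k.val + 1 then k.val else z.val := by
  rw [braidSwap, Equiv.swap_apply_def]
  split_ifs with h1 h2 h3 h4 h5 <;> simp_all [Fin.ext_iff, posL, posR]

lemma flip_lemma (n : ℕ) (k : Fin (n-1)) (x y : Fin n) :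
    (braidSwap n k x < braidSwap n k y ↔ x < y) ↔
    ¬((x = posL n k ∧ y = posR n k) ∨ (x = posR n k ∧ y = posL n k)) := by
  have hk := k.isLt
  have hx := braidSwap_val n k x
  have hy := braidSwap_val n k y
  simp only [Fin.lt_def, Fin.ext_iff, posL, posR] at *
  split_ifs at hx hy <;> omega

lemma posL_ne_posR (n : ℕ) (k : Fin (n-1)) : posL n k ≠ posR n k := by
  simp [posL, posR, Fin.ext_iff]

lemma stdB_apply {n : ℕ} (a b i j : Fin n) :
    Matrix.single a b (1 : ℕ) i j = if a = i ∧ b = j then 1 else 0 := rfl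

lemma CNaux_diag (n : ℕ) (w : List (Fin (n-1))) : ∀ π (i : Fin n), CNaux n π w i i = 0 := by
  induction w with
  | nil => intro π i; rfl
  | cons k w ih =>
    intro π i
    have h : π (posL n k) ≠ π (posR n k) := fun h => posL_ne_posR n k (π.injective h)
    simp only [CNaux, Matrix.add_apply, ih, stdB_apply]
    split_ifs with h1 h2 h2 <;> try rfl
    · exact absurd (h1.1.trans h1.2.symm) h
    · exact absurd (h1.1.trans h1.2.symm) h
    · exact absurd (h2.1.trans h2.2.symm) (Ne.symm h)

lemma iff_helper {A B F P : Prop} (h : (A ↔ B) ↔ P) :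
    ((P ↔ (A ↔ F)) ↔ (B ↔ F)) := by tauto

lemma CNaux_even_iff (n : ℕ) (w : List (Fin (n-1))) : ∀ (π : Equiv.Perm (Fin n)) (i j : Fin n),
    i ≠ j → (Even (CNaux n π w i j) ↔
      (π⁻¹ i < π⁻¹ j ↔ (finalPerm n π w)⁻¹ i < (finalPerm n π w)⁻¹ j)) := by
  induction w with
  | nil => intro π i j hij; simp [CNaux, finalPerm]
  | cons k w ih =>
    intro π i j hij
    have hab : posL n k ≠ posR n k := posL_ne_posR n k
    have hsplit : CNaux n π (k :: w) i j =
        ((if π (posL n k) = i ∧ π (posR n k) = j then 1 else 0) +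
         (if π (posR n k) = i ∧ π (posL n k) = j then 1 else 0)) +
        CNaux n (π * braidSwap n k) w i j := rfl
    have hfin : finalPerm n π (k :: w) = finalPerm n (π * braidSwap n k) w := rfl
    rw [hsplit, hfin, Nat.even_add, ih (π * braidSwap n k) i j hij]
    have happ : ∀ z, (π * braidSwap n k)⁻¹ z = braidSwap n k (π⁻¹ z) := by
      intro z
      rw [mul_inv_rev, braidSwap, Equiv.swap_inv]
      rfl
    rw [happ i, happ j]
    have hcval : (Even ((if π (posL n k) = i ∧ π (posR n k) = j then 1 else 0) +
         (if π (posR n k) = i ∧ π (posL n k) = j then 1 else 0))) ↔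
        ¬((π⁻¹ i = posL n k ∧ π⁻¹ j = posR n k) ∨ (π⁻¹ i = posR n k ∧ π⁻¹ j = posL n k)) := by
      have h1 : ∀ u : Fin n, (π u = i ↔ π⁻¹ i = u) := by
        intro u; rw [Equiv.Perm.inv_eq_iff_eq]; exact ⟨fun h => h.symm, fun h => h.symm⟩
      have h2 : ∀ u : Fin n, (π u = j ↔ π⁻¹ j = u) := by
        intro u; rw [Equiv.Perm.inv_eq_iff_eq]; exact ⟨fun h => h.symm, fun h => h.symm⟩
      simp only [h1, h2]
      by_cases hA : π⁻¹ i = posL n k ∧ π⁻¹ j = posR n k <;>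
        by_cases hB : π⁻¹ i = posR n k ∧ π⁻¹ j = posL n k
      · exact absurd (hA.1.symm.trans hB.1) hab
      · simp [hA, hB, hab, Ne.symm hab]
      · simp [hA, hB, hab, Ne.symm hab]
      · rw [if_neg hA, if_neg hB]; exact ⟨fun _ => not_or.mpr ⟨hA, hB⟩, fun _ => ⟨0, rfl⟩⟩
    rw [hcval]
    exact iff_helper (flip_lemma n k (π⁻¹ i) (π⁻¹ j))

theorem stmt1 (n : ℕ) (w : List (Fin (n - 1))) :
    (∀ i j : Fin n, Even (CN n w i j)) ↔ IsPure n w := by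
  constructor
  · intro h
    set σ := finalPerm n 1 w with hσ
    have key : ∀ i j : Fin n, i ≠ j → (i < j ↔ σ⁻¹ i < σ⁻¹ j) := by
      intro i j hij
      have := (CNaux_even_iff n w 1 i j hij).mp (h i j)
      simpa using this
    have hmono : StrictMono (fun x => σ⁻¹ x : Fin n → Fin n) := by
      intro i j hij
      exact (key i j (ne_of_lt hij)).mp hij
    have hsurj : Function.Surjective (fun x => σ⁻¹ x : Fin n → Fin n) :=
      (Equiv.surjective σ⁻¹)
    set e := StrictMono.orderIsoOfSurjective _ hmono hsurj with he
    have hinv : σ⁻¹ = 1 := by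
      apply Equiv.ext
      intro x
      have := Fin.coe_orderIso_apply e x
      simp only [StrictMono.orderIsoOfSurjective, StrictMono.orderIsoOfRightInverse,
        he] at this
      exact Fin.ext this
    rw [IsPure, ← hσ, ← inv_inv σ, hinv]
    rfl
  · intro h i j
    rcases eq_or_ne i j with rfl | hij
    · rw [CN, CNaux_diag]; exact Even.zero
    · rw [CN]
      rw [CNaux_even_iff n w 1 i j hij]
      rw [show finalPerm n 1 w = 1 from h]
end

section
/- If an n×n matrix M is the CN matrix of some braid projection word on n strands, then M is T0: for all indices i < j < k, if M(i,j) = 0 and M(j,k) = 0 then M(i,k) = 0. -/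
lemma swap_lt {n : ℕ} (l : Fin (n - 1)) {x y : Fin n} (hxy : x < y)
    (h : ¬(x = posL n l ∧ y = posR n l)) :
    Equiv.swap (posL n l) (posR n l) x < Equiv.swap (posL n l) (posR n l) y := by
  have hL : (posL n l).val = l.val := rfl
  have hR : (posR n l).val = l.val + 1 := rfl
  rcases not_and_or.mp h with h' | h' <;>
  · simp only [Equiv.swap_apply_def]
    split_ifs <;>
      (simp only [Fin.lt_iff_val_lt_val, Fin.ext_iff, ne_eq] at hxy h' ⊢ <;> omega)

lemma std_apply (a b i j : Fin n) :
    Matrix.single a b (1:ℕ) i j = if a = i ∧ b = j then 1 else 0 := by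
  simp [Matrix.single]

lemma key (n : ℕ) (w : List (Fin (n-1))) : ∀ (π : Equiv.Perm (Fin n)) (i j k : Fin n),
    π⁻¹ i < π⁻¹ j → π⁻¹ j < π⁻¹ k →
    CNaux n π w i j = 0 → CNaux n π w j k = 0 → CNaux n π w i k = 0 := by
  induction w with
  | nil => intros; rfl
  | cons l w ih =>
    intro π i j k hij hjk h1 h2
    simp only [CNaux, Matrix.add_apply, std_apply, Nat.add_eq_zero] at h1 h2 ⊢
    obtain ⟨⟨e1, e2⟩, e3⟩ := h1
    obtain ⟨⟨f1, f2⟩, f3⟩ := h2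
    replace e1 : ¬(π (posL n l) = i ∧ π (posR n l) = j) := by
      intro hp; rw [if_pos hp] at e1; exact one_ne_zero e1
    replace f1 : ¬(π (posL n l) = j ∧ π (posR n l) = k) := by
      intro hp; rw [if_pos hp] at f1; exact one_ne_zero f1
    have hinv : ∀ x : Fin n, (π * braidSwap n l)⁻¹ x
        = Equiv.swap (posL n l) (posR n l) (π⁻¹ x) := by
      intro x
      simp [braidSwap, mul_inv_rev, Equiv.Perm.mul_apply]
    have hne1 : ¬(π⁻¹ i = posL n l ∧ π⁻¹ j = posR n l) := by
      rintro ⟨hi, hj⟩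
      apply e1
      constructor
      · rw [← hi]; simp
      · rw [← hj]; simp
    have hne2 : ¬(π⁻¹ j = posL n l ∧ π⁻¹ k = posR n l) := by
      rintro ⟨hj, hk⟩
      apply f1
      constructor
      · rw [← hj]; simp
      · rw [← hk]; simp
    refine ⟨⟨?_, ?_⟩, ?_⟩
    · rw [if_neg]
      rintro ⟨hi, hk⟩
      have hpi : π⁻¹ i = posL n l := by rw [← hi]; simp
      have hpk : π⁻¹ k = posR n l := by rw [← hk]; simp
      rw [hpi] at hij; rw [hpk] at hjk
      have hj1 : (posL n l).val < (π⁻¹ j).val := hij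
      have hj2 : (π⁻¹ j).val < (posR n l).val := hjk
      have hL : (posL n l).val = l.val := rfl
      have hR : (posR n l).val = l.val + 1 := rfl
      omega
    · rw [if_neg]
      rintro ⟨hi, hk⟩
      have hpi : π⁻¹ i = posR n l := by rw [← hi]; simp
      have hpk : π⁻¹ k = posL n l := by rw [← hk]; simp
      have h3 := hij.trans hjk
      rw [hpi, hpk] at h3
      have h4 : (posR n l).val < (posL n l).val := h3
      have hL : (posL n l).val = l.val := rfl
      have hR : (posR n l).val = l.val + 1 := rfl
      omega
    · apply ih (π * braidSwap n l) i j k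
      · rw [hinv, hinv]; exact swap_lt l hij hne1
      · rw [hinv, hinv]; exact swap_lt l hjk hne2
      · exact e3
      · exact f3

theorem stmt3 (n : ℕ) (M : Matrix (Fin n) (Fin n) ℕ)
    (h : ∃ w : List (Fin (n - 1)), CN n w = M) : IsT0 M := by
  obtain ⟨w, rfl⟩ := h
  intro i j k hij hjk
  exact key n w 1 i j k (by simpa using hij) (by simpa using hjk)
end

section
/- If an n×n matrix M is the CN matrix of some braid projection word on n strands, then the reverse matrix M', defined by M'(i,j) = M(n+1-i, n+1-j) (reversing the order of rows and columns), is also the CN matrix of some braid projection word on n strands. -/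
lemma posL_rev (n : ℕ) (k : Fin (n - 1)) : posL n k.rev = (posR n k).rev := by
  have hk := k.isLt
  simp only [posL, posR, Fin.rev]
  ext
  simp only []
  omega

lemma posR_rev (n : ℕ) (k : Fin (n - 1)) : posR n k.rev = (posL n k).rev := by
  have hk := k.isLt
  simp only [posL, posR, Fin.rev]
  ext
  simp only []
  omega

lemma braidSwap_rev (n : ℕ) (k : Fin (n - 1)) :
    braidSwap n k.rev = Fin.revPerm * braidSwap n k * Fin.revPerm := by
  have h : (Fin.revPerm : Equiv.Perm (Fin n))⁻¹ = Fin.revPerm := Fin.revPerm_symm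
  rw [braidSwap, posL_rev, posR_rev, braidSwap]
  have : ((posR n k).rev : Fin n) = Fin.revPerm (posR n k) := rfl
  rw [this, (by rfl : ((posL n k).rev : Fin n) = Fin.revPerm (posL n k)),
    Equiv.swap_apply_apply, Equiv.swap_comm, h]

lemma key_s4 (n : ℕ) (w : List (Fin (n - 1))) : ∀ π : Equiv.Perm (Fin n),
    CNaux n (Fin.revPerm * π * Fin.revPerm) (w.map Fin.rev) =
      fun i j => CNaux n π w i.rev j.rev := by
  induction w with
  | nil => intro π; funext i j; simp [CNaux]
  | cons k w ih =>
    intro π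
    funext i j
    have hL : ((Fin.revPerm * π * Fin.revPerm : Equiv.Perm (Fin n))) (posL n k.rev) = (π (posR n k)).rev := by
      rw [posL_rev]; simp [Equiv.Perm.mul_apply]
    have hR : ((Fin.revPerm * π * Fin.revPerm : Equiv.Perm (Fin n))) (posR n k.rev) = (π (posL n k)).rev := by
      rw [posR_rev]; simp [Equiv.Perm.mul_apply]
    have hnext : Fin.revPerm * π * Fin.revPerm * braidSwap n k.rev =
        Fin.revPerm * (π * braidSwap n k) * Fin.revPerm := by
      rw [braidSwap_rev]
      ext x
      simp [Equiv.Perm.mul_apply]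
    show CNaux n _ (List.map Fin.rev (k :: w)) i j = _
    simp only [List.map_cons, CNaux, Matrix.add_apply, hL, hR, hnext, ih (π * braidSwap n k)]
    have e1 : ∀ a b : Fin n, Matrix.single a.rev b.rev (1:ℕ) i j
        = Matrix.single a b (1:ℕ) i.rev j.rev := by
      intro a b
      simp only [Matrix.single, Matrix.of_apply]
      congr 1
      apply propext
      constructor
      · rintro ⟨h1, h2⟩
        exact ⟨by rw [← h1, Fin.rev_rev], by rw [← h2, Fin.rev_rev]⟩
      · rintro ⟨h1, h2⟩
        exact ⟨by rw [h1, Fin.rev_rev], by rw [h2, Fin.rev_rev]⟩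
    show Matrix.single _ _ (1:ℕ) i j + Matrix.single _ _ (1:ℕ) i j + CNaux n (π * braidSwap n k) w i.rev j.rev = _
    rw [e1, e1]
    ring

theorem stmt4 (n : ℕ) (M : Matrix (Fin n) (Fin n) ℕ)
    (h : ∃ w : List (Fin (n - 1)), CN n w = M) :
    ∃ v : List (Fin (n - 1)), CN n v = fun i j => M i.rev j.rev := by
  obtain ⟨w, hw⟩ := h
  refine ⟨w.map Fin.rev, ?_⟩
  have h1 : (Fin.revPerm : Equiv.Perm (Fin n)) * 1 * Fin.revPerm = 1 := by
    ext x; simp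
  have := key_s4 n w 1
  rw [h1] at this
  rw [CN, this, ← hw, CN]
end

section
/- Let M₁ be an m×m matrix that is the CN matrix of some braid projection word on m strands, and let 1 ≤ I ≤ n−m+1. Define the n×n matrix M₂ by M₂(i+I−1, j+I−1) = M₁(i,j) for 1 ≤ i,j ≤ m and M₂(i,j) = 0 whenever i < I or j > I+m−1 (and for all other entries outside the embedded block). Then M₂ is the CN matrix of some braid projection word on n strands. -/
section Emb
variable (m n t : ℕ) (hmn : t + m ≤ n)

def embF : Fin m ↪ Fin n :=
  ⟨fun i => ⟨i.val + t, by have := i.isLt; omega⟩, by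
    intro a b h
    simp only [Fin.mk.injEq] at h
    exact Fin.ext (by omega)⟩

@[simp] lemma embF_val (a : Fin m) : (embF m n t hmn a).val = a.val + t := rfl

def liftP (σ : Equiv.Perm (Fin m)) : Equiv.Perm (Fin n) :=
  σ.viaFintypeEmbedding (embF m n t hmn)

lemma liftP_image (σ : Equiv.Perm (Fin m)) (a : Fin m) :
    liftP m n t hmn σ (embF m n t hmn a) = embF m n t hmn (σ a) :=
  Equiv.Perm.viaFintypeEmbedding_apply_image σ (embF m n t hmn) a

lemma liftP_not (σ : Equiv.Perm (Fin m)) (x : Fin n)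
    (h : x ∉ Set.range (embF m n t hmn)) : liftP m n t hmn σ x = x :=
  Equiv.Perm.viaFintypeEmbedding_apply_notMem_range σ _ h

lemma liftP_one : liftP m n t hmn 1 = 1 := by
  ext x
  by_cases h : x ∈ Set.range (embF m n t hmn)
  · obtain ⟨a, rfl⟩ := h; simp [liftP_image]
  · simp [liftP_not m n t hmn 1 x h]

lemma liftP_mul (σ τ : Equiv.Perm (Fin m)) :
    liftP m n t hmn (σ * τ) = liftP m n t hmn σ * liftP m n t hmn τ := by
  ext x
  by_cases h : x ∈ Set.range (embF m n t hmn)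
  · obtain ⟨a, rfl⟩ := h
    simp [Equiv.Perm.mul_apply, liftP_image]
  · simp [Equiv.Perm.mul_apply, liftP_not m n t hmn _ x h]

lemma liftP_swap (a b : Fin m) :
    liftP m n t hmn (Equiv.swap a b) =
      Equiv.swap (embF m n t hmn a) (embF m n t hmn b) := by
  ext x
  by_cases h : x ∈ Set.range (embF m n t hmn)
  · obtain ⟨c, rfl⟩ := h
    rw [liftP_image]
    rcases eq_or_ne c a with rfl | hca
    · simp
    rcases eq_or_ne c b with rfl | hcb
    · simp
    rw [Equiv.swap_apply_of_ne_of_ne hca hcb,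
      Equiv.swap_apply_of_ne_of_ne]
    · exact fun hh => hca ((embF m n t hmn).injective hh)
    · exact fun hh => hcb ((embF m n t hmn).injective hh)
  · rw [liftP_not m n t hmn _ x h, Equiv.swap_apply_of_ne_of_ne]
    · exact fun hh => h (hh ▸ ⟨a, rfl⟩)
    · exact fun hh => h (hh ▸ ⟨b, rfl⟩)

def shiftK (k : Fin (m - 1)) : Fin (n - 1) :=
  ⟨k.val + t, by have := k.isLt; omega⟩

lemma posL_shiftK (k : Fin (m - 1)) :
    posL n (shiftK m n t hmn k) = embF m n t hmn (posL m k) := by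
  simp [posL, shiftK, Fin.ext_iff]

lemma posR_shiftK (k : Fin (m - 1)) :
    posR n (shiftK m n t hmn k) = embF m n t hmn (posR m k) := by
  simp [posR, shiftK, Fin.ext_iff]; omega

lemma braidSwap_shiftK (k : Fin (m - 1)) :
    braidSwap n (shiftK m n t hmn k) = liftP m n t hmn (braidSwap m k) := by
  rw [braidSwap, braidSwap, posL_shiftK, posR_shiftK, liftP_swap]

lemma std_emb (a b : Fin m) (i j : Fin n) :
    Matrix.single (embF m n t hmn a) (embF m n t hmn b) (1 : ℕ) i j =
      if h : t ≤ i.val ∧ i.val < t + m ∧ t ≤ j.val ∧ j.val < t + m then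
        Matrix.single a b (1 : ℕ) ⟨i.val - t, by have := h; omega⟩ ⟨j.val - t, by have := h; omega⟩
      else 0 := by
  by_cases hblk : t ≤ i.val ∧ i.val < t + m ∧ t ≤ j.val ∧ j.val < t + m
  · rw [dif_pos hblk]
    have heq : (embF m n t hmn a = i ∧ embF m n t hmn b = j) ↔
        (a = (⟨i.val - t, by omega⟩ : Fin m) ∧ b = (⟨j.val - t, by omega⟩ : Fin m)) := by
      simp only [embF_val, Fin.ext_iff]
      omega
    simp only [Matrix.single, Matrix.of_apply]
    exact if_congr heq rfl rfl
  · rw [dif_neg hblk]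
    have hne : ¬(embF m n t hmn a = i ∧ embF m n t hmn b = j) := by
      rintro ⟨rfl, rfl⟩
      simp only [embF_val] at hblk
      apply hblk
      refine ⟨by omega, by omega, by omega, by omega⟩
    simp [Matrix.single, hne]

lemma CNaux_emb (w : List (Fin (m - 1))) :
    ∀ (σ : Equiv.Perm (Fin m)) (i j : Fin n),
      CNaux n (liftP m n t hmn σ) (w.map (shiftK m n t hmn)) i j =
        if h : t ≤ i.val ∧ i.val < t + m ∧ t ≤ j.val ∧ j.val < t + m then
          CNaux m σ w ⟨i.val - t, by have := h; omega⟩ ⟨j.val - t, by have := h; omega⟩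
        else 0 := by
  induction w with
  | nil =>
    intro σ i j
    simp only [List.map_nil, CNaux, Matrix.zero_apply]
    split <;> rfl
  | cons k w ih =>
    intro σ i j
    simp only [List.map_cons, CNaux, Matrix.add_apply,
      posL_shiftK, posR_shiftK, liftP_image, braidSwap_shiftK,
      ← liftP_mul, ih (σ * braidSwap m k) i j, std_emb]
    by_cases hblk : t ≤ i.val ∧ i.val < t + m ∧ t ≤ j.val ∧ j.val < t + m
    · simp [hblk, CNaux, Matrix.add_apply]
    · simp [hblk]

end Emb

theorem stmt5 (m n t : ℕ) (hmn : t + m ≤ n) (w : List (Fin (m - 1))) :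
    ∃ v : List (Fin (n - 1)), ∀ i j : Fin n,
      CN n v i j =
        if h : t ≤ i.val ∧ i.val < t + m ∧ t ≤ j.val ∧ j.val < t + m then
          CN m w ⟨i.val - t, by omega⟩ ⟨j.val - t, by omega⟩
        else 0 := by
  refine ⟨w.map (shiftK m n t hmn), fun i j => ?_⟩
  rw [CN, ← liftP_one m n t hmn, CNaux_emb m n t hmn w 1 i j, CN]
end

section
/- If two n×n matrices M₁ and M₂, each with all entries in {0,2}, are both CN matrices of braid projection words on n strands, then M₁ + M₂ is the CN matrix of some pure braid projection word on n strands. -/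
lemma swap_adj_order {n : ℕ} (k : Fin (n-1)) (x y : Fin n)
    (h1 : ¬(posL n k = x ∧ posR n k = y)) (h2 : ¬(posR n k = x ∧ posL n k = y)) :
    (Equiv.swap (posL n k) (posR n k) x < Equiv.swap (posL n k) (posR n k) y ↔ x < y) := by
  rw [Equiv.swap_apply_def, Equiv.swap_apply_def]
  have hL : (posL n k).val = k.val := rfl
  have hR : (posR n k).val = k.val + 1 := rfl
  simp only [Fin.ext_iff, not_and, hL, hR] at h1 h2
  split_ifs with a b c d e f g <;>
    simp only [Fin.lt_def, Fin.ext_iff, hL, hR] at * <;> omega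

lemma parity (n : ℕ) (w : List (Fin (n-1))) (π : Equiv.Perm (Fin n)) (a b : Fin n) :
    Even ((CNaux n π w) a b) ↔
      ((π⁻¹ a < π⁻¹ b) ↔ ((finalPerm n π w)⁻¹ a < (finalPerm n π w)⁻¹ b)) := by
  induction w generalizing π with
  | nil => simp [CNaux, finalPerm]
  | cons k w ih =>
    obtain ⟨x, rfl⟩ : ∃ x, a = π x := ⟨π⁻¹ a, (π.apply_symm_apply a).symm⟩
    obtain ⟨y, rfl⟩ : ∃ y, b = π y := ⟨π⁻¹ b, (π.apply_symm_apply b).symm⟩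
    have hinv : ∀ c, (π * braidSwap n k)⁻¹ (π c) = Equiv.swap (posL n k) (posR n k) c := by
      intro c
      simp [braidSwap, mul_inv_rev, Equiv.swap_inv, Equiv.Perm.mul_apply]
    have hfp : finalPerm n π (k :: w) = finalPerm n (π * braidSwap n k) w := rfl
    have hentry : (CNaux n π (k :: w)) (π x) (π y) =
        ((if posL n k = x ∧ posR n k = y then 1 else 0) +
         (if posR n k = x ∧ posL n k = y then 1 else 0)) +
        (CNaux n (π * braidSwap n k) w) (π x) (π y) := by
      simp only [CNaux, Matrix.add_apply, Matrix.single, Matrix.of_apply,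
        EmbeddingLike.apply_eq_iff_eq]
    rw [hfp, hentry]
    have IH := ih (π * braidSwap n k)
    rw [hinv x, hinv y] at IH
    rw [show π⁻¹ (π x) = x from π.symm_apply_apply x, show π⁻¹ (π y) = y from π.symm_apply_apply y]
    by_cases hc : (posL n k = x ∧ posR n k = y) ∨ (posR n k = x ∧ posL n k = y)
    · have hLR : posL n k < posR n k := by
        simp [posL, posR, Fin.lt_def]
      rcases hc with ⟨hx, hy⟩ | ⟨hx, hy⟩ <;> subst hx <;> subst hy
      · have hne : ¬(posR n k = posL n k ∧ posL n k = posR n k) := by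
          intro ⟨h, _⟩; exact absurd h (ne_of_gt hLR)
        rw [if_pos ⟨rfl, rfl⟩, if_neg hne]
        rw [Equiv.swap_apply_left, Equiv.swap_apply_right] at IH
        have : (1 + 0) + (CNaux n (π * braidSwap n k) w) (π (posL n k)) (π (posR n k)) =
            (CNaux n (π * braidSwap n k) w) (π (posL n k)) (π (posR n k)) + 1 := by ring
        rw [this, Nat.even_add_one, IH]
        constructor
        · intro h
          constructor
          · intro _; by_contra hF
            exact h (by simp [-Equiv.Perm.coe_inv, not_lt.mpr (le_of_lt hLR), hF, lt_asymm hLR])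
          · intro _; exact hLR
        · intro h hiff
          have := hiff.mpr (h.mp hLR)
          exact lt_asymm hLR this
      · have hne : ¬(posL n k = posR n k ∧ posR n k = posL n k) := by
          intro ⟨h, _⟩; exact absurd h (ne_of_lt hLR)
        rw [if_neg hne, if_pos ⟨rfl, rfl⟩]
        rw [Equiv.swap_apply_right, Equiv.swap_apply_left] at IH
        have : (0 + 1) + (CNaux n (π * braidSwap n k) w) (π (posR n k)) (π (posL n k)) =
            (CNaux n (π * braidSwap n k) w) (π (posR n k)) (π (posL n k)) + 1 := by ring
        rw [this, Nat.even_add_one, IH]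
        constructor
        · intro h
          constructor
          · intro hx; exact absurd hx (lt_asymm hLR)
          · intro hF; by_contra _
            exact h (by simp [-Equiv.Perm.coe_inv, hLR, lt_asymm hLR, hF])
        · intro h hiff
          have := hiff.mp hLR
          have := h.mpr this
          exact lt_asymm hLR this
    · push_neg at hc
      obtain ⟨hc1, hc2⟩ := hc
      have h1 : ¬(posL n k = x ∧ posR n k = y) := by
        intro ⟨u, v⟩; exact hc1 u v
      have h2 : ¬(posR n k = x ∧ posL n k = y) := by
        intro ⟨u, v⟩; exact hc2 u v
      rw [if_neg h1, if_neg h2]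
      rw [swap_adj_order k x y h1 h2] at IH
      simpa using IH

lemma even_CN_pure (n : ℕ) (w : List (Fin (n-1)))
    (h : ∀ i j, Even (CN n w i j)) : IsPure n w := by
  set σ := finalPerm n 1 w with hσ
  have key : ∀ a b : Fin n, a < b → σ⁻¹ a < σ⁻¹ b := by
    intro a b hab
    have := (parity n w 1 a b).mp (h a b)
    simp only [inv_one, Equiv.Perm.one_apply] at this
    exact (hσ ▸ this).mp hab
  have hmono : StrictMono (σ⁻¹ : Equiv.Perm (Fin n)) := fun a b h => key a b h
  let e : Fin n ≃o Fin n := { toEquiv := (σ⁻¹ : Equiv.Perm (Fin n)), map_rel_iff' := hmono.le_iff_le }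
  have he : e = OrderIso.refl (Fin n) := Subsingleton.elim _ _
  have hid : (σ⁻¹ : Equiv.Perm (Fin n)) = 1 := by
    ext a
    have := congrArg (fun (o : Fin n ≃o Fin n) => o a) he
    exact congrArg Fin.val (by simpa [e] using this)
  have : σ = 1 := by rw [← inv_inv σ, hid, inv_one]
  exact this

lemma CNaux_append (n : ℕ) (w₁ w₂ : List (Fin (n-1))) (π : Equiv.Perm (Fin n)) :
    CNaux n π (w₁ ++ w₂) = CNaux n π w₁ + CNaux n (finalPerm n π w₁) w₂ := by
  induction w₁ generalizing π with
  | nil => simp [CNaux, finalPerm]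
  | cons k w ih => simp [CNaux, finalPerm, ih, add_assoc]

lemma finalPerm_append (n : ℕ) (w₁ w₂ : List (Fin (n-1))) (π : Equiv.Perm (Fin n)) :
    finalPerm n π (w₁ ++ w₂) = finalPerm n (finalPerm n π w₁) w₂ := by
  induction w₁ generalizing π with
  | nil => rfl
  | cons k w ih => simp [finalPerm, ih]

theorem stmt6 (n : ℕ) (M₁ M₂ : Matrix (Fin n) (Fin n) ℕ)
    (h₁02 : ∀ i j, M₁ i j = 0 ∨ M₁ i j = 2)
    (h₂02 : ∀ i j, M₂ i j = 0 ∨ M₂ i j = 2)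
    (h₁ : ∃ w : List (Fin (n - 1)), CN n w = M₁)
    (h₂ : ∃ w : List (Fin (n - 1)), CN n w = M₂) :
    ∃ w : List (Fin (n - 1)), IsPure n w ∧ CN n w = M₁ + M₂ := by
  obtain ⟨w₁, hw₁⟩ := h₁
  obtain ⟨w₂, hw₂⟩ := h₂
  have p₁ : IsPure n w₁ := even_CN_pure n w₁ (by
    intro i j; rw [hw₁]; rcases h₁02 i j with h | h <;> simp [h])
  have p₂ : IsPure n w₂ := even_CN_pure n w₂ (by
    intro i j; rw [hw₂]; rcases h₂02 i j with h | h <;> simp [h])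
  refine ⟨w₁ ++ w₂, ?_, ?_⟩
  · unfold IsPure
    rw [finalPerm_append, p₁]
    exact p₂
  · unfold CN at *
    rw [CNaux_append, p₁, hw₁, hw₂]
end

section
/- Let M be an n×n symmetric zero-diagonal matrix with all entries non-negative even integers, and let M02 be the (0,2)-matrix obtained from M by replacing every non-zero entry with 2. If M02 is the CN matrix of some braid projection word on n strands, then M is the CN matrix of some pure braid projection word on n strands. -/
-- auxiliary lemmas

theorem Equiv.Perm.apply_inv_self {α : Type*} (f : Equiv.Perm α) (x : α) : f (f⁻¹ x) = x :=
  f.apply_symm_apply x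

theorem Equiv.Perm.inv_apply_self {α : Type*} (f : Equiv.Perm α) (x : α) : f⁻¹ (f x) = x :=
  f.symm_apply_apply x

lemma braidSwap_sq (n : ℕ) (k : Fin (n-1)) : braidSwap n k * braidSwap n k = 1 := by
  simp [braidSwap, Equiv.swap_mul_self]

lemma CNaux_cons_apply (n : ℕ) (π : Equiv.Perm (Fin n)) (k : Fin (n-1)) (w : List (Fin (n-1)))
    (a b : Fin n) :
    CNaux n π (k :: w) a b =
      (if π (posL n k) = a ∧ π (posR n k) = b then 1 else 0) +
      (if π (posR n k) = a ∧ π (posL n k) = b then 1 else 0) +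
      CNaux n (π * braidSwap n k) w a b := by
  simp [CNaux, Matrix.add_apply, Matrix.single, Matrix.of_apply]

lemma CNaux_comm (n : ℕ) (w : List (Fin (n-1))) : ∀ (π : Equiv.Perm (Fin n)) (a b : Fin n),
    CNaux n π w a b = CNaux n π w b a := by
  induction w with
  | nil => intro π a b; simp [CNaux]
  | cons k w ih =>
    intro π a b
    rw [CNaux_cons_apply, CNaux_cons_apply, ih]
    have : (if π (posL n k) = a ∧ π (posR n k) = b then 1 else 0) =
        (if π (posR n k) = b ∧ π (posL n k) = a then (1:ℕ) else 0) := by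
      simp [and_comm]
    have h2 : (if π (posR n k) = a ∧ π (posL n k) = b then 1 else 0) =
        (if π (posL n k) = b ∧ π (posR n k) = a then (1:ℕ) else 0) := by
      simp [and_comm]
    omega

lemma finalPerm_replicate (n : ℕ) (k : Fin (n-1)) (t : List (Fin (n-1))) :
    ∀ (m : ℕ) (π : Equiv.Perm (Fin n)),
    finalPerm n π (List.replicate (2*m+1) k ++ t) = finalPerm n (π * braidSwap n k) t := by
  intro m
  induction m with
  | zero => intro π; simp [finalPerm]
  | succ m ih =>
    intro π
    have h3 : 2*(m+1)+1 = (2*m+1) + 1 + 1 := by ring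
    rw [h3, List.replicate_succ, List.replicate_succ, List.cons_append, List.cons_append]
    rw [show finalPerm n π (k :: k :: (List.replicate (2*m+1) k ++ t)) =
      finalPerm n (π * braidSwap n k * braidSwap n k) (List.replicate (2*m+1) k ++ t) from rfl]
    rw [mul_assoc, braidSwap_sq, mul_one, ih]

lemma CNaux_replicate (n : ℕ) (k : Fin (n-1)) (t : List (Fin (n-1))) :
    ∀ (m : ℕ) (π : Equiv.Perm (Fin n)),
    CNaux n π (List.replicate (2*m+1) k ++ t) =
      (2*m+1) • (Matrix.single (π (posL n k)) (π (posR n k)) 1 +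
        Matrix.single (π (posR n k)) (π (posL n k)) 1) +
      CNaux n (π * braidSwap n k) t := by
  intro m
  induction m with
  | zero => intro π; simp [CNaux]
  | succ m ih =>
    intro π
    have h3 : 2*(m+1)+1 = (2*m+1) + 1 + 1 := by ring
    rw [h3, List.replicate_succ, List.replicate_succ, List.cons_append, List.cons_append]
    rw [show CNaux n π (k :: k :: (List.replicate (2*m+1) k ++ t)) =
      Matrix.single (π (posL n k)) (π (posR n k)) 1 +
      Matrix.single (π (posR n k)) (π (posL n k)) 1 +
      CNaux n (π * braidSwap n k) (k :: (List.replicate (2*m+1) k ++ t)) from rfl]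
    rw [show CNaux n (π * braidSwap n k) (k :: (List.replicate (2*m+1) k ++ t)) =
      Matrix.single ((π * braidSwap n k) (posL n k)) ((π * braidSwap n k) (posR n k)) 1 +
      Matrix.single ((π * braidSwap n k) (posR n k)) ((π * braidSwap n k) (posL n k)) 1 +
      CNaux n (π * braidSwap n k * braidSwap n k) (List.replicate (2*m+1) k ++ t) from rfl]
    rw [mul_assoc, braidSwap_sq, mul_one, ih]
    have hL : (π * braidSwap n k) (posL n k) = π (posR n k) := by
      simp [braidSwap, Equiv.Perm.mul_apply, Equiv.swap_apply_left]
    have hR : (π * braidSwap n k) (posR n k) = π (posL n k) := by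
      simp [braidSwap, Equiv.Perm.mul_apply, Equiv.swap_apply_right]
    rw [hL, hR]
    ext a b
    simp only [Matrix.add_apply, Matrix.smul_apply, smul_eq_mul]
    ring

/-- the word transformation -/
def wordTrans (n : ℕ) : Equiv.Perm (Fin n) → List (Fin (n-1)) → Matrix (Fin n) (Fin n) ℕ →
    List (Fin (n-1))
  | _, [], _ => []
  | π, k :: w, R =>
    List.replicate
      (R (π (posL n k)) (π (posR n k)) -
        CNaux n (π * braidSwap n k) w (π (posL n k)) (π (posR n k))) k ++
    wordTrans n (π * braidSwap n k) w
      (fun a b =>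
        if (a = π (posL n k) ∧ b = π (posR n k)) ∨ (a = π (posR n k) ∧ b = π (posL n k)) then
          CNaux n (π * braidSwap n k) w a b
        else R a b)

lemma trans_spec (n : ℕ) (w : List (Fin (n-1))) :
    ∀ (π : Equiv.Perm (Fin n)) (R : Matrix (Fin n) (Fin n) ℕ),
    (∀ a b, R a b = R b a) →
    (∀ a b, CNaux n π w a b ≤ R a b) →
    (∀ a b, CNaux n π w a b = 0 → R a b = 0) →
    (∀ a b, CNaux n π w a b % 2 = R a b % 2) →
    CNaux n π (wordTrans n π w R) = R ∧ finalPerm n π (wordTrans n π w R) = finalPerm n π w := by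
  induction w with
  | nil =>
    intro π R hs h1 h2 h3
    refine ⟨?_, rfl⟩
    have : R = 0 := by
      ext a b
      exact h2 a b rfl
    rw [this]; rfl
  | cons k w ih =>
    intro π R hs h1 h2 h3
    set i := π (posL n k) with hi
    set j := π (posR n k) with hj
    set π' := π * braidSwap n k with hπ'
    have hij : i ≠ j := fun h => posL_ne_posR n k (π.injective h)
    have hcons : ∀ a b, CNaux n π (k :: w) a b =
        (if i = a ∧ j = b then 1 else 0) + (if j = a ∧ i = b then 1 else 0) +
        CNaux n π' w a b := fun a b => CNaux_cons_apply n π k w a b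
    set R' : Matrix (Fin n) (Fin n) ℕ := fun a b =>
      if (a = i ∧ b = j) ∨ (a = j ∧ b = i) then CNaux n π' w a b else R a b with hR'
    set c := R i j - CNaux n π' w i j with hc
    -- basic entry facts
    have hEij : CNaux n π (k :: w) i j = 1 + CNaux n π' w i j := by
      rw [hcons]; simp [hij, hij.symm]
    have hcpos : CNaux n π' w i j < R i j := by
      have := h1 i j; rw [hEij] at this; omega
    have hcodd : c % 2 = 1 := by
      have := h3 i j; rw [hEij] at this; omega
    obtain ⟨m, hm⟩ : ∃ m, c = 2*m + 1 := ⟨c / 2, by omega⟩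
    -- hypotheses for R'
    have hcond_symm : ∀ a b : Fin n, ((a = i ∧ b = j) ∨ (a = j ∧ b = i)) ↔
        ((b = i ∧ a = j) ∨ (b = j ∧ a = i)) := by tauto
    have hoff : ∀ a b : Fin n, ¬((a = i ∧ b = j) ∨ (a = j ∧ b = i)) →
        CNaux n π (k :: w) a b = CNaux n π' w a b := by
      intro a b h
      rw [hcons]
      have : ¬(i = a ∧ j = b) := fun ⟨u, v⟩ => h (Or.inl ⟨u.symm, v.symm⟩)
      have h2' : ¬(j = a ∧ i = b) := fun ⟨u, v⟩ => h (Or.inr ⟨u.symm, v.symm⟩)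
      simp [this, h2']
    have hs' : ∀ a b, R' a b = R' b a := by
      intro a b
      simp only [hR']
      by_cases h : (a = i ∧ b = j) ∨ (a = j ∧ b = i)
      · rw [if_pos h, if_pos ((hcond_symm a b).mp h), CNaux_comm]
      · rw [if_neg h, if_neg (fun h' => h ((hcond_symm a b).mpr h'))]
        exact hs a b
    have h1' : ∀ a b, CNaux n π' w a b ≤ R' a b := by
      intro a b
      simp only [hR']
      by_cases h : (a = i ∧ b = j) ∨ (a = j ∧ b = i)
      · rw [if_pos h]
      · rw [if_neg h, ← hoff a b h]; exact h1 a b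
    have h2' : ∀ a b, CNaux n π' w a b = 0 → R' a b = 0 := by
      intro a b hz
      simp only [hR']
      by_cases h : (a = i ∧ b = j) ∨ (a = j ∧ b = i)
      · rw [if_pos h]; exact hz
      · rw [if_neg h]; exact h2 a b (by rw [hoff a b h]; exact hz)
    have h3' : ∀ a b, CNaux n π' w a b % 2 = R' a b % 2 := by
      intro a b
      simp only [hR']
      by_cases h : (a = i ∧ b = j) ∨ (a = j ∧ b = i)
      · rw [if_pos h]
      · rw [if_neg h, ← hoff a b h]; exact h3 a b
    obtain ⟨ihCN, ihFP⟩ := ih π' R' hs' h1' h2' h3'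
    have htr : wordTrans n π (k :: w) R = List.replicate c k ++ wordTrans n π' w R' := rfl
    constructor
    · rw [htr, hm, CNaux_replicate, ← hm, ihCN]
      ext a b
      have hE : ((Matrix.single i j (1:ℕ) + Matrix.single j i 1 :
          Matrix (Fin n) (Fin n) ℕ)) a b =
          (if i = a ∧ j = b then 1 else 0) + (if j = a ∧ i = b then 1 else 0) := by
        simp [Matrix.single, Matrix.add_apply, Matrix.of_apply]
      rw [Matrix.add_apply, Matrix.smul_apply, hE, smul_eq_mul]
      by_cases hab : (a = i ∧ b = j) ∨ (a = j ∧ b = i)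
      · rcases hab with ⟨ha, hb⟩ | ⟨ha, hb⟩
        · subst ha; subst hb
          have hRv : R' i j = CNaux n π' w i j := by
            show (if (i = i ∧ j = j) ∨ (i = j ∧ j = i) then CNaux n π' w i j else R i j) = _
            rw [if_pos (Or.inl ⟨rfl, rfl⟩)]
          rw [hRv]
          have e1 : (i = i ∧ j = j) := ⟨rfl, rfl⟩
          have e2 : ¬(j = i ∧ i = j) := fun ⟨u, _⟩ => hij u.symm
          rw [if_pos e1, if_neg e2]
          omega
        · subst ha; subst hb
          have hRv : R' j i = CNaux n π' w j i := by
            show (if (j = i ∧ i = j) ∨ (j = j ∧ i = i) then CNaux n π' w j i else R j i) = _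
            rw [if_pos (Or.inr ⟨rfl, rfl⟩)]
          rw [hRv]
          have e1 : ¬(i = j ∧ j = i) := fun ⟨u, _⟩ => hij u
          have e2 : (j = j ∧ i = i) := ⟨rfl, rfl⟩
          rw [if_neg e1, if_pos e2]
          have hsym1 : R j i = R i j := hs j i
          have hsym2 : CNaux n π' w j i = CNaux n π' w i j := CNaux_comm n w π' j i
          omega
      · have e1 : ¬(i = a ∧ j = b) := fun ⟨u, v⟩ => hab (Or.inl ⟨u.symm, v.symm⟩)
        have e2 : ¬(j = a ∧ i = b) := fun ⟨u, v⟩ => hab (Or.inr ⟨u.symm, v.symm⟩)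
        have hRv : R' a b = R a b := by
          show (if (a = i ∧ b = j) ∨ (a = j ∧ b = i) then CNaux n π' w a b else R a b) = _
          rw [if_neg hab]
        rw [hRv, if_neg e1, if_neg e2]
        omega
    · rw [htr, hm, finalPerm_replicate, ihFP]
      rfl

lemma swap_lt_s7 (n : ℕ) (k : Fin (n-1)) (p q : Fin n)
    (h1 : ¬(p = posL n k ∧ q = posR n k)) (h2 : ¬(p = posR n k ∧ q = posL n k)) :
    (Equiv.swap (posL n k) (posR n k) p < Equiv.swap (posL n k) (posR n k) q ↔ p < q) := by
  have hk := k.isLt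
  rw [Equiv.swap_apply_def, Equiv.swap_apply_def]
  split_ifs <;>
    simp only [posL, posR, Fin.ext_iff, Fin.lt_def, not_and] at * <;>
    omega

lemma order_iff (n : ℕ) (w : List (Fin (n-1))) :
    ∀ (π : Equiv.Perm (Fin n)) (a b : Fin n), a ≠ b →
    (((finalPerm n π w)⁻¹ a < (finalPerm n π w)⁻¹ b ↔ π⁻¹ a < π⁻¹ b) ↔
      CNaux n π w a b % 2 = 0) := by
  induction w with
  | nil => intro π a b hab; simp [finalPerm, CNaux]
  | cons k w ih =>
    intro π a b hab
    set i := π (posL n k) with hi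
    set j := π (posR n k) with hj
    set π' := π * braidSwap n k with hπ'
    have hfp : finalPerm n π (k :: w) = finalPerm n π' w := rfl
    have hinv : ∀ x : Fin n, π'⁻¹ x = Equiv.swap (posL n k) (posR n k) (π⁻¹ x) := by
      intro x
      have hp : π'⁻¹ = (braidSwap n k)⁻¹ * π⁻¹ := by rw [hπ', mul_inv_rev]
      rw [hp, Equiv.Perm.mul_apply]
      show (Equiv.swap (posL n k) (posR n k))⁻¹ (π⁻¹ x) = _
      rw [Equiv.swap_inv]
    have hLi : π⁻¹ i = posL n k := π.symm_apply_apply _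
    have hRj : π⁻¹ j = posR n k := π.symm_apply_apply _
    have hLR : posL n k < posR n k := by
      simp [posL, posR, Fin.lt_def]
    have hij : i ≠ j := fun h => posL_ne_posR n k (π.injective h)
    by_cases hcase1 : i = a ∧ j = b
    · obtain ⟨ha, hb⟩ := hcase1
      subst ha; subst hb
      have hcnt : CNaux n π (k :: w) i j = 1 + CNaux n π' w i j := by
        rw [CNaux_cons_apply, ← hi, ← hj, ← hπ']
        have e2 : ¬(j = i ∧ i = j) := fun ⟨u, _⟩ => hij u.symm
        rw [if_pos ⟨rfl, rfl⟩, if_neg e2]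
      rw [hfp, hcnt]
      have hIH := ih π' i j hab
      rw [hinv, hinv, hLi, hRj, Equiv.swap_apply_left, Equiv.swap_apply_right] at hIH
      rw [hLi, hRj]
      have hF : ¬ (posR n k < posL n k) := not_lt.mpr hLR.le
      by_cases hrest : CNaux n π' w i j % 2 = 0
      · have hnP : ¬ ((finalPerm n π' w)⁻¹ i < (finalPerm n π' w)⁻¹ j) :=
          fun hp => hF ((hIH.mpr hrest).mp hp)
        exact iff_of_false (fun h => hnP (h.mpr hLR)) (by omega)
      · have hPP : (finalPerm n π' w)⁻¹ i < (finalPerm n π' w)⁻¹ j := by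
          by_contra hnp
          exact hrest (hIH.mp (iff_of_false hnp hF))
        exact iff_of_true ⟨fun _ => hLR, fun _ => hPP⟩ (by omega)
    · by_cases hcase2 : j = a ∧ i = b
      · obtain ⟨ha, hb⟩ := hcase2
        subst ha; subst hb
        have hcnt : CNaux n π (k :: w) j i = 1 + CNaux n π' w j i := by
          rw [CNaux_cons_apply, ← hi, ← hj, ← hπ']
          have e1 : ¬(i = j ∧ j = i) := fun ⟨u, _⟩ => hij u
          rw [if_neg e1, if_pos ⟨rfl, rfl⟩]
        rw [hfp, hcnt]
        have hIH := ih π' j i hab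
        rw [hinv, hinv, hLi, hRj, Equiv.swap_apply_left, Equiv.swap_apply_right] at hIH
        rw [hLi, hRj]
        have hF : ¬ (posR n k < posL n k) := not_lt.mpr hLR.le
        by_cases hrest : CNaux n π' w j i % 2 = 0
        · have hQ : (finalPerm n π' w)⁻¹ j < (finalPerm n π' w)⁻¹ i :=
            (hIH.mpr hrest).mpr hLR
          exact iff_of_false (fun h => hF (h.mp hQ)) (by omega)
        · have hnQ : ¬ ((finalPerm n π' w)⁻¹ j < (finalPerm n π' w)⁻¹ i) :=
            fun hq => hrest (hIH.mp (iff_of_true hq hLR))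
          exact iff_of_true ⟨fun hq => absurd hq hnQ, fun h => absurd h hF⟩ (by omega)
      · -- neither
        have e1 : ¬(i = a ∧ j = b) := hcase1
        have e2 : ¬(j = a ∧ i = b) := hcase2
        have hcnt : CNaux n π (k :: w) a b = CNaux n π' w a b := by
          rw [CNaux_cons_apply, ← hi, ← hj, ← hπ', if_neg e1, if_neg e2]
          omega
        rw [hfp, hcnt]
        have hIH := ih π' a b hab
        have hord : π'⁻¹ a < π'⁻¹ b ↔ π⁻¹ a < π⁻¹ b := by
          rw [hinv, hinv]
          apply swap_lt_s7
          · rintro ⟨hp, hq⟩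
            exact e1 ⟨by rw [hi, ← hp, Equiv.Perm.apply_inv_self],
              by rw [hj, ← hq, Equiv.Perm.apply_inv_self]⟩
          · rintro ⟨hp, hq⟩
            exact e2 ⟨by rw [hj, ← hp, Equiv.Perm.apply_inv_self],
              by rw [hi, ← hq, Equiv.Perm.apply_inv_self]⟩
        rw [← hord]
        exact hIH

lemma pure_of_even (n : ℕ) (w : List (Fin (n-1)))
    (h : ∀ a b, CNaux n 1 w a b % 2 = 0) : finalPerm n 1 w = 1 := by
  set σ := finalPerm n 1 w with hσ
  have hmono : StrictMono (fun x => σ⁻¹ x : Fin n → Fin n) := by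
    intro a b hab
    have h' := (order_iff n w 1 a b hab.ne).mpr (h a b)
    rw [← hσ] at h'
    simp only [inv_one, Equiv.Perm.one_apply] at h'
    exact h'.mpr hab
  have hmono2 : StrictMono (fun x => σ x : Fin n → Fin n) := by
    intro a b hab
    by_contra hno
    rcases lt_or_eq_of_le (not_lt.mp hno) with hlt | heq
    · have := hmono hlt
      simp only [Equiv.Perm.inv_apply_self] at this
      exact absurd this (not_lt.mpr hab.le)
    · exact hab.ne' (σ.injective heq)
  have key : ∀ x, σ⁻¹ x = x := by
    intro x
    haveI : WellFoundedLT (Fin n) := inferInstance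
    have h1 : x ≤ σ⁻¹ x := hmono.le_apply
    have h2 : σ⁻¹ x ≤ σ (σ⁻¹ x) := hmono2.le_apply
    rw [Equiv.Perm.apply_inv_self] at h2
    exact le_antisymm h2 h1
  apply Equiv.ext
  intro x
  simp only [Equiv.Perm.one_apply]
  conv_lhs => rw [← key x]
  exact σ.apply_inv_self x

theorem stmt7 (n : ℕ) (M : Matrix (Fin n) (Fin n) ℕ)
    (hsymm : M.IsSymm) (hdiag : ∀ i, M i i = 0)
    (heven : ∀ i j, Even (M i j))
    (h02 : ∃ w : List (Fin (n - 1)),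
      CN n w = fun i j => if M i j = 0 then 0 else 2) :
    ∃ w : List (Fin (n - 1)), IsPure n w ∧ CN n w = M := by
  obtain ⟨w, hw⟩ := h02
  have hwval : ∀ a b, CNaux n 1 w a b = if M a b = 0 then 0 else 2 := by
    intro a b
    have : CN n w a b = (fun i j => if M i j = 0 then 0 else 2) a b := by rw [hw]
    exact this
  have hMsymm : ∀ a b, M a b = M b a := fun a b => (congrFun (congrFun hsymm b) a)
  have h1 : ∀ a b, CNaux n 1 w a b ≤ M a b := by
    intro a b
    rw [hwval]
    split_ifs with h
    · omega
    · obtain ⟨r, hr⟩ := heven a b; omega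
  have h2 : ∀ a b, CNaux n 1 w a b = 0 → M a b = 0 := by
    intro a b h
    rw [hwval] at h
    by_contra hne
    rw [if_neg hne] at h
    omega
  have h3 : ∀ a b, CNaux n 1 w a b % 2 = M a b % 2 := by
    intro a b
    rw [hwval]
    obtain ⟨r, hr⟩ := heven a b
    split_ifs with h <;> omega
  obtain ⟨hCN, hFP⟩ := trans_spec n w 1 M hMsymm h1 h2 h3
  refine ⟨wordTrans n 1 w M, ?_, hCN⟩
  unfold IsPure
  rw [hFP]
  apply pure_of_even
  intro a b
  rw [hwval]
  split_ifs <;> omega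
end

section
/- The number of 5×5 symmetric zero-diagonal T0 matrices with all entries in {0,2} is exactly 357. -/
def rowT : Fin 10 → Fin 5 := ![0,0,0,0,1,1,1,2,2,3]
def colT : Fin 10 → Fin 5 := ![1,2,3,4,2,3,4,3,4,4]

def pidx (i j : Fin 5) : ℕ := min i.val j.val * 5 + max i.val j.val

def pdecode : ℕ → Fin 10
  | 1 => 0 | 2 => 1 | 3 => 2 | 4 => 3 | 7 => 4 | 8 => 5 | 9 => 6
  | 13 => 7 | 14 => 8 | 19 => 9 | _ => 0

def fromG (g : Fin 10 → Bool) : Matrix (Fin 5) (Fin 5) ℕ :=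
  fun i j => if i = j then 0 else if g (pdecode (pidx i j)) then 2 else 0

def toG (M : Matrix (Fin 5) (Fin 5) ℕ) : Fin 10 → Bool :=
  fun k => decide (M (rowT k) (colT k) = 2)

def QT (g : Fin 10 → Bool) : Prop := IsT0 (fromG g)

instance : DecidablePred QT := fun g => by
  unfold QT IsT0
  exact @Fintype.decidableForallFintype _ _ (fun i => @Fintype.decidableForallFintype _ _
    (fun j => @Fintype.decidableForallFintype _ _ (fun k => inferInstance) _) _) _

lemma lemA : ∀ k : Fin 10, rowT k ≠ colT k ∧ pdecode (pidx (rowT k) (colT k)) = k := by decide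

lemma lemB : ∀ i j : Fin 5, i ≠ j →
    (rowT (pdecode (pidx i j)) = i ∧ colT (pdecode (pidx i j)) = j) ∨
    (rowT (pdecode (pidx i j)) = j ∧ colT (pdecode (pidx i j)) = i) := by decide

lemma pidx_comm (i j : Fin 5) : pidx i j = pidx j i := by
  unfold pidx; rw [min_comm, max_comm]

lemma left_inv_lemma (M : Matrix (Fin 5) (Fin 5) ℕ) (hsym : M.IsSymm)
    (hdiag : ∀ i, M i i = 0) (h02 : ∀ i j, M i j = 0 ∨ M i j = 2) :
    fromG (toG M) = M := by
  funext i j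
  unfold fromG toG
  by_cases hij : i = j
  · simp [hij, hdiag j]
  · simp only [hij, if_false]
    have hM : M (rowT (pdecode (pidx i j))) (colT (pdecode (pidx i j))) = M i j := by
      rcases lemB i j hij with ⟨h1, h2⟩ | ⟨h1, h2⟩
      · rw [h1, h2]
      · rw [h1, h2]; exact hsym.apply i j
    rcases h02 i j with h | h
    · simp [hM, h]
    · simp [hM, h]

lemma right_inv_lemma (g : Fin 10 → Bool) : toG (fromG g) = g := by
  funext k
  obtain ⟨h1, h2⟩ := lemA k
  unfold toG fromG
  rw [if_neg h1, h2]
  cases hg : g k <;> simp [hg]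

lemma sym_fromG (g : Fin 10 → Bool) : (fromG g).IsSymm := by
  apply Matrix.IsSymm.ext
  intro i j
  unfold fromG
  rw [pidx_comm j i]
  by_cases h : i = j
  · simp [h]
  · simp [h, Ne.symm h]

lemma diag_fromG (g : Fin 10 → Bool) : ∀ i, fromG g i i = 0 := by
  intro i; simp [fromG]

lemma o2_fromG (g : Fin 10 → Bool) : ∀ i j, fromG g i j = 0 ∨ fromG g i j = 2 := by
  intro i j; unfold fromG; split_ifs <;> simp

def myEquiv : {M : Matrix (Fin 5) (Fin 5) ℕ //
      M.IsSymm ∧ (∀ i, M i i = 0) ∧ (∀ i j, M i j = 0 ∨ M i j = 2) ∧ IsT0 M} ≃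
    {g : Fin 10 → Bool // QT g} where
  toFun := fun ⟨M, hs, hd, h02, ht⟩ =>
    ⟨toG M, show IsT0 (fromG (toG M)) by rw [left_inv_lemma M hs hd h02]; exact ht⟩
  invFun := fun ⟨g, hg⟩ => ⟨fromG g, sym_fromG g, diag_fromG g, o2_fromG g, hg⟩
  left_inv := fun ⟨M, hs, hd, h02, ht⟩ => Subtype.ext (left_inv_lemma M hs hd h02)
  right_inv := fun ⟨g, hg⟩ => Subtype.ext (right_inv_lemma g)

set_option maxRecDepth 100000 in
set_option maxHeartbeats 4000000 in
theorem stmt15 :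
    Nat.card {M : Matrix (Fin 5) (Fin 5) ℕ //
      M.IsSymm ∧ (∀ i, M i i = 0) ∧ (∀ i j, M i j = 0 ∨ M i j = 2) ∧ IsT0 M} = 357 := by
  rw [Nat.card_congr myEquiv, Nat.card_eq_fintype_card]
  decide
end

section
/- Let b be a signed braid word on n strands (a list of pairs (k, ε) with k ∈ Fin (n-1) and ε ∈ {+1, −1}) that is pure, i.e., the induced permutation of strands is the identity. Then the crossing matrix C(b) is symmetric: for all i, j, the signed count of crossings between strands i and j at which strand i passes over strand j equals the signed count of crossings at which strand j passes over strand i. -/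
/-- OU matrix of a signed braid word scanned with assignment `π`:
entry `(i,j)` counts crossings between strands `i` and `j` where `i` is the
over-strand.  For a positive letter (`true`) the strand moving from position
`k` to position `k+1` is the over-strand. -/
def OUaux (n : ℕ) : Equiv.Perm (Fin n) → List (Fin (n - 1) × Bool) → Matrix (Fin n) (Fin n) ℕ
  | _, [] => 0
  | π, (k, ε) :: w =>
      (if ε then Matrix.single (π (posL n k)) (π (posR n k)) 1
       else Matrix.single (π (posR n k)) (π (posL n k)) 1) +
      OUaux n (π * braidSwap n k) w

/-- OU matrix of a signed braid word on `n` strands. -/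
def OU (n : ℕ) (b : List (Fin (n - 1) × Bool)) : Matrix (Fin n) (Fin n) ℕ := OUaux n 1 b

/-- Crossing matrix of a signed braid word scanned with assignment `π`:
entry `(i,j)` is the number of positive minus negative crossings between
strands `i` and `j` in which `i` is the over-strand. -/
def CMataux (n : ℕ) : Equiv.Perm (Fin n) → List (Fin (n - 1) × Bool) → Matrix (Fin n) (Fin n) ℤ
  | _, [] => 0
  | π, (k, ε) :: w =>
      (if ε then Matrix.single (π (posL n k)) (π (posR n k)) (1 : ℤ)
       else -Matrix.single (π (posR n k)) (π (posL n k)) (1 : ℤ)) +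
      CMataux n (π * braidSwap n k) w

/-- Crossing matrix of a signed braid word on `n` strands. -/
def CMat (n : ℕ) (b : List (Fin (n - 1) × Bool)) : Matrix (Fin n) (Fin n) ℤ := CMataux n 1 b

/-- Final position-to-strand assignment of a signed braid word. -/
def finalPermS (n : ℕ) : Equiv.Perm (Fin n) → List (Fin (n - 1) × Bool) → Equiv.Perm (Fin n)
  | π, [] => π
  | π, (k, _) :: w => finalPermS n (π * braidSwap n k) w

/-- A signed braid word is pure if its induced permutation is the identity. -/
def IsPureS (n : ℕ) (b : List (Fin (n - 1) × Bool)) : Prop := finalPermS n 1 b = 1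

def chi (n : ℕ) (π : Equiv.Perm (Fin n)) (i j : Fin n) : ℤ :=
  if π.symm i < π.symm j then 1 else 0

lemma swap_val (n : ℕ) (k : Fin (n-1)) (p : Fin n) :
    (Equiv.swap (posL n k) (posR n k) p).val =
      if p.val = k.val then k.val + 1
      else if p.val = k.val + 1 then k.val else p.val := by
  by_cases hA : p = posL n k
  · rw [hA, Equiv.swap_apply_left]; simp [posL, posR]
  · by_cases hB : p = posR n k
    · rw [hB, Equiv.swap_apply_right]
      have : p.val = k.val + 1 := by rw [hB]; rfl
      have hne : p.val ≠ k.val := by omega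
      simp [posL, posR, this, hne]
    · rw [Equiv.swap_apply_of_ne_of_ne hA hB]
      have h1 : p.val ≠ k.val := fun h => hA (Fin.ext (by simpa [posL] using h))
      have h2 : p.val ≠ k.val + 1 := fun h => hB (Fin.ext (by simpa [posR] using h))
      simp [h1, h2]

lemma step (n : ℕ) (k : Fin (n-1)) (ε : Bool) (π : Equiv.Perm (Fin n)) (i j : Fin n)
    (hij : i ≠ j) :
    (if ε then Matrix.single (π (posL n k)) (π (posR n k)) (1 : ℤ)
       else -Matrix.single (π (posR n k)) (π (posL n k)) (1 : ℤ)) i j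
    - (if ε then Matrix.single (π (posL n k)) (π (posR n k)) (1 : ℤ)
       else -Matrix.single (π (posR n k)) (π (posL n k)) (1 : ℤ)) j i
    = chi n π i j - chi n (π * braidSwap n k) i j := by
  have hLp : ∀ x : Fin n, (π x = i) ↔ (x = π.symm i) := by
    intro x; rw [Equiv.eq_symm_apply]
  have hLq : ∀ x : Fin n, (π x = j) ↔ (x = π.symm j) := by
    intro x; rw [Equiv.eq_symm_apply]
  have hsymm : ∀ x, (π * braidSwap n k).symm x
      = Equiv.swap (posL n k) (posR n k) (π.symm x) := by
    intro x
    rw [← Equiv.Perm.inv_def, mul_inv_rev, Equiv.Perm.mul_apply, braidSwap, Equiv.swap_inv,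
      Equiv.Perm.inv_def]
  have hpq : (π.symm i).val ≠ (π.symm j).val := by
    intro h
    exact hij (by simpa using congrArg π (Fin.ext h : π.symm i = π.symm j))
  unfold chi
  rw [hsymm i, hsymm j]
  cases ε <;>
  · simp only [if_true, if_false, Matrix.single, Matrix.neg_apply, Matrix.of_apply,
      Bool.false_eq_true, ite_false, ite_true, hLp, hLq, Fin.lt_def, swap_val]
    simp only [Fin.ext_iff, posL, posR]
    split_ifs <;> omega

lemma CMat_sub_telescope (n : ℕ) (i j : Fin n) (hij : i ≠ j) :
    ∀ (w : List (Fin (n - 1) × Bool)) (π : Equiv.Perm (Fin n)),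
      CMataux n π w i j - CMataux n π w j i
        = chi n π i j - chi n (finalPermS n π w) i j := by
  intro w
  induction w with
  | nil => intro π; simp [CMataux, finalPermS]
  | cons a w ih =>
      intro π
      obtain ⟨k, ε⟩ := a
      have h := step n k ε π i j hij
      have h2 := ih (π * braidSwap n k)
      simp only [CMataux, finalPermS, Matrix.add_apply]
      have : (if ε then Matrix.single (π (posL n k)) (π (posR n k)) (1 : ℤ)
       else -Matrix.single (π (posR n k)) (π (posL n k)) (1 : ℤ)) i j
        + CMataux n (π * braidSwap n k) w i j
        - ((if ε then Matrix.single (π (posL n k)) (π (posR n k)) (1 : ℤ)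
       else -Matrix.single (π (posR n k)) (π (posL n k)) (1 : ℤ)) j i
        + CMataux n (π * braidSwap n k) w j i)
        = (chi n π i j - chi n (π * braidSwap n k) i j)
          + (chi n (π * braidSwap n k) i j
             - chi n (finalPermS n (π * braidSwap n k) w) i j) := by
        rw [← h, ← h2]; ring
      rw [this]; ring

theorem stmt17 (n : ℕ) (b : List (Fin (n - 1) × Bool)) (hb : IsPureS n b) :
    ∀ i j : Fin n, CMat n b i j = CMat n b j i := by
  intro i j
  by_cases hij : i = j
  · rw [hij]
  · have h := CMat_sub_telescope n i j hij b 1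
    unfold IsPureS at hb
    rw [hb] at h
    simp only [sub_self] at h
    unfold CMat
    linarith [h]
end

section
/- For every n×n zero-diagonal symmetric integer matrix M there exists a pure signed braid word b on n strands whose crossing matrix C(b) equals M. -/
-- my aux
lemma finalPermS_append (n : ℕ) (a b : List (Fin (n-1) × Bool)) :
    ∀ π, finalPermS n π (a ++ b) = finalPermS n (finalPermS n π a) b := by
  induction a with
  | nil => intro π; rfl
  | cons h t ih => intro π; obtain ⟨k, e⟩ := h; simpa [finalPermS] using ih _

lemma CMataux_append (n : ℕ) (a b : List (Fin (n-1) × Bool)) :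
    ∀ π, CMataux n π (a ++ b) = CMataux n π a + CMataux n (finalPermS n π a) b := by
  induction a with
  | nil => intro π; simp [CMataux, finalPermS]
  | cons h t ih => intro π; obtain ⟨k, e⟩ := h
                   simp [CMataux, finalPermS, ih, add_assoc]

-- twist lemmas
lemma finalPermS_replicate (n : ℕ) (i : Fin (n-1)) (s : Bool) (m : ℕ) (π : Equiv.Perm (Fin n)) :
    finalPermS n π (List.replicate (2*m) (i, s)) = π := by
  induction m generalizing π with
  | zero => rfl
  | succ m ih =>
      have : 2*(m+1) = (2*m)+1+1 := by ring
      rw [this]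
      simp only [List.replicate_succ, finalPermS]
      rw [mul_assoc, braidSwap_sq, mul_one]
      exact ih π

lemma CMataux_replicate (n : ℕ) (i : Fin (n-1)) (s : Bool) (m : ℕ) (π : Equiv.Perm (Fin n)) :
    CMataux n π (List.replicate (2*m) (i, s)) =
      (if s then (m : ℤ) else -(m : ℤ)) •
        (Matrix.single (π (posL n i)) (π (posR n i)) (1 : ℤ) +
         Matrix.single (π (posR n i)) (π (posL n i)) (1 : ℤ)) := by
  induction m generalizing π with
  | zero => simp [CMataux]
  | succ m ih =>
      have h2 : 2*(m+1) = (2*m)+1+1 := by ring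
      rw [h2]
      simp only [List.replicate_succ, CMataux]
      have hL : (π * braidSwap n i) (posL n i) = π (posR n i) := by
        simp [braidSwap, Equiv.swap_apply_left]
      have hR : (π * braidSwap n i) (posR n i) = π (posL n i) := by
        simp [braidSwap, Equiv.swap_apply_right]
      rw [mul_assoc, braidSwap_sq, mul_one, ih π]
      rw [hL, hR]
      cases s <;> simp only [if_true, if_false, Bool.false_eq_true] <;> push_cast <;> module

def conjW (n : ℕ) (k : Fin (n-1)) (w : List (Fin (n-1) × Bool)) : List (Fin (n-1) × Bool) :=
  (k, true) :: (w ++ [(k, false)])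

lemma finalPermS_conjW (n : ℕ) (k : Fin (n-1)) (w : List (Fin (n-1) × Bool))
    (hw : ∀ π, finalPermS n π w = π) (π : Equiv.Perm (Fin n)) :
    finalPermS n π (conjW n k w) = π := by
  simp only [conjW, finalPermS, finalPermS_append, hw]
  rw [mul_assoc, braidSwap_sq, mul_one]

lemma CMataux_conjW (n : ℕ) (k : Fin (n-1)) (w : List (Fin (n-1) × Bool))
    (hw : ∀ π, finalPermS n π w = π) (π : Equiv.Perm (Fin n)) :
    CMataux n π (conjW n k w) = CMataux n (π * braidSwap n k) w := by
  have hL : (π * braidSwap n k) (posL n k) = π (posR n k) := by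
    simp [braidSwap, Equiv.swap_apply_left]
  have hR : (π * braidSwap n k) (posR n k) = π (posL n k) := by
    simp [braidSwap, Equiv.swap_apply_right]
  simp only [conjW, CMataux, CMataux_append, hw, if_true, Bool.false_eq_true, if_false]
  rw [hL, hR]
  abel

def blockAux (n : ℕ) (i : Fin (n-1)) (s : Bool) (m : ℕ) :
    (d : ℕ) → (h : i.val + 1 + d ≤ n - 1) → List (Fin (n-1) × Bool)
  | 0, _ => List.replicate (2*m) (i, s)
  | d+1, h => conjW n ⟨i.val + 1 + d, by omega⟩ (blockAux n i s m d (by omega))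

lemma finalPermS_blockAux (n : ℕ) (i : Fin (n-1)) (s : Bool) (m : ℕ) :
    ∀ (d : ℕ) (h : i.val + 1 + d ≤ n - 1) (π : Equiv.Perm (Fin n)),
      finalPermS n π (blockAux n i s m d h) = π := by
  intro d
  induction d with
  | zero => intro h π; exact finalPermS_replicate n i s m π
  | succ d ih => intro h π; exact finalPermS_conjW n _ _ (fun π => ih _ π) π

lemma CMataux_blockAux (n : ℕ) (i : Fin (n-1)) (s : Bool) (m : ℕ) :
    ∀ (d : ℕ) (h : i.val + 1 + d ≤ n - 1) (π : Equiv.Perm (Fin n)),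
      CMataux n π (blockAux n i s m d h) =
        (if s then (m : ℤ) else -(m : ℤ)) •
          (Matrix.single (π ⟨i.val, by omega⟩) (π ⟨i.val + 1 + d, by omega⟩) (1 : ℤ) +
           Matrix.single (π ⟨i.val + 1 + d, by omega⟩) (π ⟨i.val, by omega⟩) (1 : ℤ)) := by
  intro d
  induction d with
  | zero =>
      intro h π
      have := CMataux_replicate n i s m π
      simpa [posL, posR, blockAux] using this
  | succ d ih =>
      intro h π
      rw [show blockAux n i s m (d+1) h = conjW n ⟨i.val + 1 + d, by omega⟩ (blockAux n i s m d (by omega)) from rfl]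
      rw [CMataux_conjW n _ _ (fun π => finalPermS_blockAux n i s m d _ π) π]
      rw [ih (by omega)]
      have e1 : (π * braidSwap n ⟨i.val + 1 + d, by omega⟩) ⟨i.val, by omega⟩
          = π ⟨i.val, by omega⟩ := by
        simp only [Equiv.Perm.mul_apply, braidSwap]
        rw [Equiv.swap_apply_of_ne_of_ne] <;> simp [posL, posR, Fin.ext_iff] <;> omega
      have e2 : (π * braidSwap n ⟨i.val + 1 + d, by omega⟩) ⟨i.val + 1 + d, by omega⟩
          = π ⟨i.val + 1 + (d+1), by omega⟩ := by
        simp only [Equiv.Perm.mul_apply, braidSwap]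
        rw [show (⟨i.val + 1 + d, by omega⟩ : Fin n) = posL n ⟨i.val + 1 + d, by omega⟩ from rfl,
          Equiv.swap_apply_left]
        rfl
      rw [e1, e2]

def pairBlock (n : ℕ) (M : Matrix (Fin n) (Fin n) ℤ) (p : Fin n × Fin n) :
    List (Fin (n-1) × Bool) :=
  if h : p.1 < p.2 then
    blockAux n ⟨p.1.val, by have := p.2.isLt; have := h; omega⟩
      (decide (0 ≤ M p.1 p.2)) (M p.1 p.2).natAbs
      (p.2.val - p.1.val - 1)
      (by show p.1.val + 1 + (p.2.val - p.1.val - 1) ≤ n - 1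
          have := p.2.isLt; have : p.1.val < p.2.val := h; omega)
  else []

lemma finalPermS_pairBlock (n : ℕ) (M : Matrix (Fin n) (Fin n) ℤ) (p : Fin n × Fin n)
    (π : Equiv.Perm (Fin n)) : finalPermS n π (pairBlock n M p) = π := by
  unfold pairBlock
  split
  · exact finalPermS_blockAux n _ _ _ _ _ π
  · rfl

lemma CMat_pairBlock (n : ℕ) (M : Matrix (Fin n) (Fin n) ℤ) (p : Fin n × Fin n)
    (π : Equiv.Perm (Fin n)) :
    CMataux n π (pairBlock n M p) =
      if p.1 < p.2 then
        M p.1 p.2 • (Matrix.single (π p.1) (π p.2) (1 : ℤ) +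
          Matrix.single (π p.2) (π p.1) (1 : ℤ))
      else 0 := by
  unfold pairBlock
  split
  · rename_i h
    rw [CMataux_blockAux]
    simp only [if_pos h]
    have hv : (if (decide (0 ≤ M p.1 p.2)) = true then ((M p.1 p.2).natAbs : ℤ)
        else -((M p.1 p.2).natAbs : ℤ)) = M p.1 p.2 := by
      by_cases h0 : 0 ≤ M p.1 p.2
      · rw [if_pos (by simpa using h0)]; omega
      · rw [if_neg (by simpa using h0)]; omega
    rw [hv]
    have hp : p.1.val < p.2.val := h
    have hq : ∀ (hh : p.1.val + 1 + (p.2.val - p.1.val - 1) < n),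
        (⟨p.1.val + 1 + (p.2.val - p.1.val - 1), hh⟩ : Fin n) = p.2 :=
      fun hh => Fin.ext (show p.1.val + 1 + (p.2.val - p.1.val - 1) = p.2.val by omega)
    simp only [Fin.eta, hq]
  · rename_i h
    simp [CMataux, if_neg h]

noncomputable def bigWord (n : ℕ) (M : Matrix (Fin n) (Fin n) ℤ) : List (Fin (n-1) × Bool) :=
  ((Finset.univ.filter (fun p : Fin n × Fin n => p.1 < p.2)).toList.map
    (pairBlock n M)).flatten

lemma finalPermS_flatten (n : ℕ) (M : Matrix (Fin n) (Fin n) ℤ)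
    (l : List (Fin n × Fin n)) (π : Equiv.Perm (Fin n)) :
    finalPermS n π ((l.map (pairBlock n M)).flatten) = π := by
  induction l generalizing π with
  | nil => rfl
  | cons p t ih =>
      simp only [List.map_cons, List.flatten_cons, finalPermS_append,
        finalPermS_pairBlock]
      exact ih π

lemma CMataux_flatten (n : ℕ) (M : Matrix (Fin n) (Fin n) ℤ)
    (l : List (Fin n × Fin n)) (π : Equiv.Perm (Fin n)) :
    CMataux n π ((l.map (pairBlock n M)).flatten) =
      (l.map (fun p => CMataux n π (pairBlock n M p))).sum := by
  induction l generalizing π with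
  | nil => rfl
  | cons p t ih =>
      simp only [List.map_cons, List.flatten_cons, CMataux_append,
        finalPermS_pairBlock, List.sum_cons]
      rw [ih π]

lemma list_sum_toList {α β : Type*} [AddCommMonoid β] (s : Finset α) (f : α → β) :
    (s.toList.map f).sum = ∑ x ∈ s, f x := by
  rw [Finset.sum, ← Finset.coe_toList s, Multiset.map_coe, Multiset.sum_coe]

lemma entry_smul (n : ℕ) (v : ℤ) (a b x y : Fin n) :
    (v • (Matrix.single a b (1:ℤ) + Matrix.single b a (1:ℤ))) x y =
      (if a = x ∧ b = y then v else 0) + (if b = x ∧ a = y then v else 0) := by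
  simp [Matrix.smul_apply, Matrix.add_apply, Matrix.single, Matrix.of_apply,
    mul_add, mul_ite, mul_one, mul_zero]


theorem stmt18 (n : ℕ) (M : Matrix (Fin n) (Fin n) ℤ)
    (hdiag : ∀ i, M i i = 0) (hsymm : M.IsSymm) :
    ∃ b : List (Fin (n - 1) × Bool), IsPureS n b ∧ CMat n b = M := by
  refine ⟨bigWord n M, finalPermS_flatten n M _ 1, ?_⟩
  have hM : ∀ i j : Fin n, M j i = M i j := fun i j => by
    conv_rhs => rw [← hsymm]
    rfl
  rw [CMat, bigWord, CMataux_flatten]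
  have hg : ((Finset.univ.filter (fun p : Fin n × Fin n => p.1 < p.2)).toList.map
      (fun p => CMataux n 1 (pairBlock n M p))).sum =
      ∑ p ∈ Finset.univ.filter (fun p : Fin n × Fin n => p.1 < p.2),
        (if p.1 < p.2 then
          M p.1 p.2 • (Matrix.single p.1 p.2 (1:ℤ) +
            Matrix.single p.2 p.1 (1:ℤ)) else 0) := by
    rw [← list_sum_toList]
    congr 1
    apply List.map_congr_left
    intro p _
    rw [CMat_pairBlock]
    simp
  rw [hg, Finset.sum_congr rfl
    (fun p hp => if_pos ((Finset.mem_filter.1 hp).2 : p.1 < p.2))]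
  ext x y
  rw [Matrix.sum_apply]
  rw [Finset.sum_congr rfl (fun p _ => entry_smul n (M p.1 p.2) p.1 p.2 x y)]
  rcases lt_trichotomy x y with hxy | hxy | hxy
  · rw [Finset.sum_eq_single_of_mem (x, y) (by simpa using hxy)]
    · simp [(ne_of_lt hxy).symm]
    · rintro ⟨b1, b2⟩ hmem hb
      have hlt : b1 < b2 := (Finset.mem_filter.1 hmem).2
      have h1 : ¬(b1 = x ∧ b2 = y) := by rintro ⟨rfl, rfl⟩; exact hb rfl
      have h2 : ¬(b2 = x ∧ b1 = y) := by
        rintro ⟨rfl, rfl⟩; exact absurd hxy (not_lt.2 hlt.le)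
      simp [h1, h2]
  · subst hxy
    rw [Finset.sum_eq_zero, (hdiag x).symm]
    rintro ⟨b1, b2⟩ hmem
    have hlt : b1 < b2 := (Finset.mem_filter.1 hmem).2
    have h1 : ¬(b1 = x ∧ b2 = x) := by rintro ⟨rfl, rfl⟩; exact absurd hlt (lt_irrefl _)
    have h2 : ¬(b2 = x ∧ b1 = x) := by rintro ⟨rfl, rfl⟩; exact absurd hlt (lt_irrefl _)
    simp [h1, h2]
  · rw [Finset.sum_eq_single_of_mem (y, x) (by simpa using hxy)]
    · simp [(ne_of_lt hxy).symm, hM]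
    · rintro ⟨b1, b2⟩ hmem hb
      have hlt : b1 < b2 := (Finset.mem_filter.1 hmem).2
      have h1 : ¬(b1 = x ∧ b2 = y) := by
        rintro ⟨rfl, rfl⟩; exact absurd hxy (not_lt.2 hlt.le)
      have h2 : ¬(b2 = x ∧ b1 = y) := by rintro ⟨rfl, rfl⟩; exact hb rfl
      simp [h1, h2]
end
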